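/- If a class of groups satisfies the uniform Reiter condition, then it satisfies a uniform isoperimetric inequality: for every ε' > 0, every group G in the class, and every finite symmetric subset S ⊆ G, there is a finite subset E ⊆ G of size at most r(ε'/|S|, |S|) with |∂_S E| ≤ ε'|E|. -/

import Mathlib

open Pointwise

attribute [local instance] Classical.propDecidable

open MeasureTheory

noncomputable def chi (a : ℝ) : ℝ → ℝ := Set.indicator (Set.Ioo 0 a) 1

lemma chi_nonneg (a t : ℝ) : 0 ≤ chi a t := Set.indicator_nonneg (fun _ _ => zero_le_one) t

lemma chi_of_nonpos (a : ℝ) {t : ℝ} (ht : t ≤ 0) : chi a t = 0 :=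
  Set.indicator_of_notMem (fun h => absurd h.1 (not_lt.2 ht)) _

lemma chi_of_pos (a : ℝ) {t : ℝ} (ht : 0 < t) : chi a t = if t < a then 1 else 0 := by
  unfold chi
  by_cases h : t < a
  · rw [Set.indicator_of_mem (Set.mem_Ioo.2 ⟨ht, h⟩)]; simp [h]
  · rw [Set.indicator_of_notMem (fun hm => h hm.2)]; simp [h]

lemma chi_integrable (a : ℝ) : Integrable (chi a) := by
  unfold chi
  rw [integrable_indicator_iff measurableSet_Ioo]
  refine integrableOn_const ?_ ?_
  · rw [Real.volume_Ioo]; exact ENNReal.ofReal_ne_top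
  · simp

lemma integral_chi {a : ℝ} (ha : 0 ≤ a) : ∫ t, chi a t = a := by
  unfold chi
  rw [integral_indicator_one measurableSet_Ioo, measureReal_def, Real.volume_Ioo, sub_zero,
    ENNReal.toReal_ofReal ha]

lemma integral_abs_chi_sub_of_le {a b : ℝ} (ha : 0 ≤ a) (hab : a ≤ b) :
    ∫ t, |chi b t - chi a t| = b - a := by
  have key : (fun t => |chi b t - chi a t|) = Set.indicator (Set.Ioo 0 b \ Set.Ioo 0 a) 1 := by
    funext t
    rcases le_or_gt t 0 with ht | ht
    · rw [chi_of_nonpos _ ht, chi_of_nonpos _ ht,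
        Set.indicator_of_notMem (fun h => absurd h.1.1 (not_lt.2 ht))]
      simp
    · rw [chi_of_pos _ ht, chi_of_pos _ ht]
      by_cases h1 : t < a
      · rw [if_pos h1, if_pos (lt_of_lt_of_le h1 hab),
          Set.indicator_of_notMem (fun h => h.2 ⟨ht, h1⟩)]
        simp
      · rw [if_neg h1]
        by_cases h2 : t < b
        · rw [if_pos h2, Set.indicator_of_mem
            ((Set.mem_diff t).2 ⟨Set.mem_Ioo.2 ⟨ht, h2⟩, fun h => h1 h.2⟩)]
          simp
        · rw [if_neg h2, Set.indicator_of_notMem (fun h => h2 h.1.2)]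
          simp
  rw [key, integral_indicator_one (measurableSet_Ioo.diff measurableSet_Ioo), measureReal_def,
    measure_diff (Set.Ioo_subset_Ioo le_rfl hab) measurableSet_Ioo.nullMeasurableSet
      (by rw [Real.volume_Ioo]; exact ENNReal.ofReal_ne_top),
    Real.volume_Ioo, Real.volume_Ioo, sub_zero, sub_zero,
    ← ENNReal.ofReal_sub _ ha, ENNReal.toReal_ofReal (by linarith)]

lemma integral_abs_chi_sub {a b : ℝ} (ha : 0 ≤ a) (hb : 0 ≤ b) :
    ∫ t, |chi a t - chi b t| = |a - b| := by
  rcases le_total a b with h | h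
  · have heq : (fun t => |chi a t - chi b t|) = fun t => |chi b t - chi a t| := by
      funext t; rw [abs_sub_comm]
    rw [heq, integral_abs_chi_sub_of_le ha h, abs_sub_comm, abs_of_nonneg (by linarith)]
  · rw [integral_abs_chi_sub_of_le hb h, abs_of_nonneg (by linarith)]

theorem uniformReiter_implies_uniformIsoperimetric {ι : Type*} (G : ι → Type*)
    [∀ i, Group (G i)] (r : ℝ → ℕ → ℕ)
    (hReiter : ∀ ε : ℝ, 0 < ε → ∀ i : ι, ∀ S : Finset (G i),
      ∃ μ : G i →₀ ℝ, (∀ x, 0 ≤ μ x) ∧ (μ.sum fun _ v => v) = 1 ∧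
        μ.support.card ≤ r ε S.card ∧
        ∀ g ∈ S, (∑' x : G i, |μ (g * x) - μ x|) < ε) :
    ∀ ε' : ℝ, 0 < ε' → ∀ i : ι, ∀ S : Finset (G i), S.Nonempty → S = S⁻¹ →
      ∃ E : Finset (G i), E.Nonempty ∧ E.card ≤ r (ε' / S.card) S.card ∧
        (((S * E) \ E).card : ℝ) ≤ ε' * E.card := by
  intro ε' hε' i S hSne hSsymm
  have hS0 : (0 : ℝ) < S.card := by exact_mod_cast Finset.card_pos.2 hSne
  obtain ⟨μ, hμ0, hμ1, hμcard, hμclose⟩ := hReiter (ε' / S.card) (div_pos hε' hS0) i S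
  classical
  set D : Finset (G i) := μ.support ∪ S * μ.support with hD
  have hsuppD : μ.support ⊆ D := Finset.subset_union_left
  -- the ℓ¹ summand vanishes off D
  have hoff : ∀ g ∈ S, ∀ x : G i, x ∉ D → |μ (g * x) - μ x| = 0 := by
    intro g hg x hx
    have hx1 : μ x = 0 := by
      by_contra h
      exact hx (hsuppD (Finsupp.mem_support_iff.2 h))
    have hx2 : μ (g * x) = 0 := by
      by_contra h
      apply hx
      refine Finset.mem_union_right _ ?_
      have hginv : g⁻¹ ∈ S := by
        rw [hSsymm]; exact Finset.inv_mem_inv hg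
      have hxe : x = g⁻¹ * (g * x) := by group
      rw [hxe]
      exact Finset.mul_mem_mul hginv (Finsupp.mem_support_iff.2 h)
    rw [hx1, hx2]; simp
  set N : ℝ → ℝ := fun t => ∑ x ∈ D, chi (μ x) t with hN
  have hNint : Integrable N := integrable_finset_sum _ (fun x _ => chi_integrable _)
  have hNval : ∫ t, N t = 1 := by
    rw [hN, integral_finset_sum _ (fun x _ => chi_integrable _)]
    rw [Finset.sum_congr rfl (fun x _ => integral_chi (hμ0 x))]
    rw [← hμ1, Finsupp.sum]
    exact (Finset.sum_subset hsuppD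
      (fun x _ hx => Finsupp.notMem_support_iff.1 hx)).symm
  set B : G i → ℝ → ℝ := fun g t => ∑ x ∈ D, |chi (μ (g * x)) t - chi (μ x) t| with hB
  have hBint : ∀ g, Integrable (B g) :=
    fun g => integrable_finset_sum _
      (fun x _ => ((chi_integrable _).sub (chi_integrable _)).abs)
  have hBnonneg : ∀ g t, 0 ≤ B g t :=
    fun g t => Finset.sum_nonneg fun x _ => abs_nonneg _
  have hBval : ∀ g ∈ S, ∫ t, B g t < ε' / S.card := by
    intro g hg
    have h1 : ∫ t, ∑ x ∈ D, |chi (μ (g * x)) t - chi (μ x) t|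
        = ∑ x ∈ D, ∫ t, |chi (μ (g * x)) t - chi (μ x) t| :=
      integral_finset_sum _ (fun x _ => ((chi_integrable _).sub (chi_integrable _)).abs)
    have heq : ∫ t, B g t = ∑ x ∈ D, |μ (g * x) - μ x| := by
      simp only [hB]
      rw [h1]
      exact Finset.sum_congr rfl fun x _ => integral_abs_chi_sub (hμ0 _) (hμ0 _)
    rw [heq, ← tsum_eq_sum (L := SummationFilter.unconditional _) (hoff g hg)]
    exact hμclose g hg
  -- averaging: find a good threshold t
  obtain ⟨t, ht⟩ : ∃ t, ∑ g ∈ S, B g t < ε' * N t := by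
    by_contra h
    push_neg at h
    have hmono : ∫ t, ε' * N t ≤ ∫ t, ∑ g ∈ S, B g t :=
      integral_mono (hNint.const_mul ε')
        (integrable_finset_sum _ fun g _ => hBint g) h
    rw [integral_const_mul, hNval, mul_one,
      integral_finset_sum _ (fun g _ => hBint g)] at hmono
    have hsum : ∑ g ∈ S, ∫ t, B g t < ∑ g ∈ S, ε' / S.card :=
      Finset.sum_lt_sum_of_nonempty hSne (fun g hg => hBval g hg)
    have hconst : ∑ _g ∈ S, (ε' / S.card : ℝ) = ε' := by
      rw [Finset.sum_const, nsmul_eq_mul]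
      rw [mul_comm, div_mul_cancel₀ ε' hS0.ne']
    linarith
  have ht0 : 0 < t := by
    by_contra h
    push_neg at h
    have hNt : N t = 0 := Finset.sum_eq_zero fun x _ => chi_of_nonpos _ h
    have hBt : 0 ≤ ∑ g ∈ S, B g t := Finset.sum_nonneg fun g _ => hBnonneg g t
    rw [hNt, mul_zero] at ht
    linarith
  set E : Finset (G i) := μ.support.filter (fun x => t < μ x) with hE
  have hEsub : E ⊆ μ.support := Finset.filter_subset _ _
  have hmemE : ∀ x, x ∈ E ↔ t < μ x := by
    intro x
    rw [hE, Finset.mem_filter]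
    constructor
    · exact fun h => h.2
    · intro h
      exact ⟨Finsupp.mem_support_iff.2 (lt_trans ht0 h).ne', h⟩
  have hNcard : N t = E.card := by
    show ∑ x ∈ D, chi (μ x) t = (E.card : ℝ)
    have hterm : ∀ x ∈ D, chi (μ x) t = if x ∈ E then (1 : ℝ) else 0 := by
      intro x _
      rw [chi_of_pos _ ht0]
      by_cases hx : x ∈ E
      · rw [if_pos hx, if_pos ((hmemE x).1 hx)]
      · rw [if_neg hx, if_neg (fun hc => hx ((hmemE x).2 hc))]
    rw [Finset.sum_congr rfl hterm, Finset.sum_ite_mem,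
      Finset.inter_eq_right.2 (hEsub.trans hsuppD), Finset.sum_const,
      nsmul_eq_mul, mul_one]
  have hEpos : 0 < E.card := by
    by_contra h
    push_neg at h
    have : E.card = 0 := Nat.le_zero.1 h
    have hN0 : N t = 0 := by rw [hNcard, this, Nat.cast_zero]
    rw [hN0, mul_zero] at ht
    exact absurd ht (not_lt.2 (Finset.sum_nonneg fun g _ => hBnonneg g t))
  -- per-generator boundary bound
  have hbound : ∀ g ∈ S, (((E.image (fun x => g * x)) \ E).card : ℝ) ≤ B g t := by
    intro g hg
    set F : Finset (G i) := E.filter (fun x => g * x ∉ E) with hF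
    have himg : (E.image (fun x => g * x)) \ E = F.image (fun x => g * x) := by
      ext y
      simp only [Finset.mem_sdiff, Finset.mem_image, Finset.mem_filter, hF]
      constructor
      · rintro ⟨⟨x, hx, rfl⟩, hy⟩
        exact ⟨x, ⟨hx, hy⟩, rfl⟩
      · rintro ⟨x, ⟨hx, hgx⟩, rfl⟩
        exact ⟨⟨x, hx, rfl⟩, hgx⟩
    rw [himg, Finset.card_image_of_injective _ (mul_right_injective g)]
    have hcardF : (F.card : ℝ) = ∑ x ∈ F, |chi (μ (g * x)) t - chi (μ x) t| := by
      rw [Finset.card_eq_sum_ones, Nat.cast_sum]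
      refine Finset.sum_congr rfl ?_
      intro x hx
      rw [hF, Finset.mem_filter] at hx
      obtain ⟨hxE, hgx⟩ := hx
      rw [chi_of_pos _ ht0, chi_of_pos _ ht0, if_pos ((hmemE x).1 hxE),
        if_neg (fun hc => hgx ((hmemE _).2 hc))]
      norm_num
    rw [hcardF]
    simp only [hB]
    refine Finset.sum_le_sum_of_subset_of_nonneg ?_ (fun x _ _ => abs_nonneg _)
    intro x hx
    exact hsuppD (hEsub ((Finset.filter_subset _ _) hx))
  have hcover : (S * E) \ E ⊆ S.biUnion (fun g => (E.image (fun x => g * x)) \ E) := by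
    intro y hy
    rw [Finset.mem_sdiff] at hy
    obtain ⟨g, hg, x, hx, rfl⟩ := Finset.mem_mul.1 hy.1
    exact Finset.mem_biUnion.2
      ⟨g, hg, Finset.mem_sdiff.2 ⟨Finset.mem_image.2 ⟨x, hx, rfl⟩, hy.2⟩⟩
  refine ⟨E, Finset.card_pos.1 hEpos, le_trans (Finset.card_le_card hEsub) hμcard, ?_⟩
  calc (((S * E) \ E).card : ℝ)
      ≤ ((S.biUnion (fun g => (E.image (fun x => g * x)) \ E)).card : ℝ) := by
        exact_mod_cast Finset.card_le_card hcover
    _ ≤ (∑ g ∈ S, ((E.image (fun x => g * x)) \ E).card : ℕ) := by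
        exact_mod_cast Finset.card_biUnion_le
    _ = ∑ g ∈ S, (((E.image (fun x => g * x)) \ E).card : ℝ) := by
        push_cast; ring
    _ ≤ ∑ g ∈ S, B g t := Finset.sum_le_sum hbound
    _ ≤ ε' * N t := le_of_lt ht
    _ = ε' * E.card := by rw [hNcard]
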